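/- Let F : X → ℝ be a non-decreasing, differentiable, DR-submodular function on a compact rectangle X = ∏_{i=1}^n [ℓ_i, u_i]. Then for all x, x̂ ∈ X, F(x) ≤ F̃(x; x̂) := F(x̂) + Σ_{i=1}^n (∂F/∂x_i)(x̂) · [x_i − x̂_i]^+. -/

import Mathlib

lemma step_conc {n : ℕ} (ℓ u : Fin n → ℝ)
    (F : (Fin n → ℝ) → ℝ) (hdiff : Differentiable ℝ F)
    (hconc : ∀ (i : Fin n), ∀ x ∈ Set.Icc ℓ u,
      ConcaveOn ℝ {t : ℝ | x + Pi.single i t ∈ Set.Icc ℓ u}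
        (fun t : ℝ => F (x + Pi.single i t)))
    (xh : Fin n → ℝ) (hxh : xh ∈ Set.Icc ℓ u) (i : Fin n) (δ : ℝ) (hδ : 0 ≤ δ)
    (hmem : xh + Pi.single i δ ∈ Set.Icc ℓ u) :
    F (xh + Pi.single i δ) ≤ F xh + fderiv ℝ F xh (Pi.single i 1) * δ := by
  rcases eq_or_lt_of_le hδ with h0 | h0
  · simp [← h0]
  · set g : ℝ → ℝ := fun t => F (xh + Pi.single i t) with hg
    have hmem0 : (0:ℝ) ∈ {t : ℝ | xh + Pi.single i t ∈ Set.Icc ℓ u} := by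
      simp only [Set.mem_setOf_eq, Pi.single_zero, add_zero]; exact hxh
    have hmemδ : δ ∈ {t : ℝ | xh + Pi.single i t ∈ Set.Icc ℓ u} := hmem
    have hd : HasDerivAt g (fderiv ℝ F xh (Pi.single i 1)) 0 := by
      have hline : HasDerivAt (fun t : ℝ => xh + t • (Pi.single i (1:ℝ) : Fin n → ℝ))
          (Pi.single i (1:ℝ) : Fin n → ℝ) 0 := by
        simpa using ((hasDerivAt_id (0:ℝ)).smul_const
          (Pi.single i (1:ℝ) : Fin n → ℝ)).const_add xh
      have := (by simpa using (hdiff xh).hasFDerivAt :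
          HasFDerivAt F (fderiv ℝ F xh) (xh + (0:ℝ) • (Pi.single i (1:ℝ) : Fin n → ℝ))).comp_hasDerivAt 0 hline
      have heq : (fun t : ℝ => F (xh + t • (Pi.single i (1:ℝ) : Fin n → ℝ))) = g := by
        funext t
        congr 1
        funext j
        by_cases hj : j = i <;> simp [hj, Pi.single_apply]
      simp only [Function.comp_def] at this
      rw [heq] at this
      exact this
    have hcv : ConvexOn ℝ {t : ℝ | xh + Pi.single i t ∈ Set.Icc ℓ u} (fun t => -(g t)) :=
      (hconc i xh hxh).neg
    have hslope := hcv.le_slope_of_hasDerivAt hmem0 hmemδ h0 hd.neg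
    rw [slope_def_field] at hslope
    rw [sub_zero, le_div_iff₀ h0] at hslope
    have hg0 : g 0 = F xh := by simp [hg]
    have hgδ : g δ = F (xh + Pi.single i δ) := rfl
    nlinarith [hslope]


/-- Gradient-based first-order overestimator.
For a non-decreasing, differentiable, DR-submodular function `F` on the compact rectangle
`X = Icc ℓ u`, for all `x, x̂ ∈ X`,
`F x ≤ F̃(x; x̂) = F x̂ + ∑ i (∂F/∂x_i)(x̂) · [x_i − x̂_i]⁺`.
(`xh` plays the role of `x̂`; the partial derivative is `fderiv ℝ F xh (Pi.single i 1)`.) -/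
theorem stmt_4 {n : ℕ} (hn : 1 ≤ n) (ℓ u : Fin n → ℝ) (hlu : ∀ i, ℓ i < u i)
    (F : (Fin n → ℝ) → ℝ) (hdiff : Differentiable ℝ F)
    (hsub : ∀ x ∈ Set.Icc ℓ u, ∀ y ∈ Set.Icc ℓ u, F (x ⊔ y) + F (x ⊓ y) ≤ F x + F y)
    (hconc : ∀ (i : Fin n), ∀ x ∈ Set.Icc ℓ u,
      ConcaveOn ℝ {t : ℝ | x + Pi.single i t ∈ Set.Icc ℓ u}
        (fun t : ℝ => F (x + Pi.single i t)))
    (hmono : ∀ x ∈ Set.Icc ℓ u, ∀ y ∈ Set.Icc ℓ u, x ≤ y → F x ≤ F y)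
    (x xh : Fin n → ℝ) (hx : x ∈ Set.Icc ℓ u) (hxh : xh ∈ Set.Icc ℓ u) :
    F x ≤ F xh + ∑ i : Fin n, fderiv ℝ F xh (Pi.single i 1) * max (x i - xh i) 0 := by
  classical
  set m : Fin n → ℝ := fun i => max (x i) (xh i) with hm
  set δ : Fin n → ℝ := fun i => max (x i - xh i) 0 with hδdef
  have hmδ : ∀ i, m i = xh i + δ i := by
    intro i
    simp only [hm, hδdef]
    rcases le_total (x i) (xh i) with h | h
    · rw [max_eq_right h, max_eq_right (by linarith)]; ring
    · rw [max_eq_left h, max_eq_left (by linarith)]; ring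
  have hxhm : ∀ i, xh i ≤ m i := fun i => le_max_right _ _
  set y : ℕ → (Fin n → ℝ) := fun k i => if (i : ℕ) < k then m i else xh i with hy
  have hy_mem : ∀ k, y k ∈ Set.Icc ℓ u := by
    intro k
    constructor <;> intro j <;> simp only [hy] <;> split
    · exact le_sup_of_le_left (hx.1 j)
    · exact hxh.1 j
    · exact sup_le (hx.2 j) (hxh.2 j)
    · exact hxh.2 j
  have hy0 : y 0 = xh := by funext j; simp [hy]
  have hyn : y n = m := by funext j; simp [hy, j.isLt]
  have hxm : F x ≤ F m := by
    refine hmono x hx m (by rw [← hyn]; exact hy_mem n) fun j => le_max_left _ _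
  have hq_mem : ∀ i : Fin n, xh + Pi.single i (δ i) ∈ Set.Icc ℓ u := by
    intro i
    constructor <;> intro j <;> by_cases hj : j = i
    · subst hj
      rw [Pi.add_apply, Pi.single_eq_same, ← hmδ j]
      exact le_sup_of_le_left (hx.1 j)
    · simpa [Pi.single_apply, hj] using hxh.1 j
    · subst hj
      rw [Pi.add_apply, Pi.single_eq_same, ← hmδ j]
      exact sup_le (hx.2 j) (hxh.2 j)
    · simpa [Pi.single_apply, hj] using hxh.2 j
  -- telescoping
  have tel : F (y n) - F (y 0) = ∑ i : Fin n, (F (y ((i : ℕ) + 1)) - F (y (i : ℕ))) := by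
    rw [Fin.sum_univ_eq_sum_range (fun k => F (y (k + 1)) - F (y k)) n,
      Finset.sum_range_sub (fun k => F (y k)) n]
  -- per-coordinate step
  have hstep : ∀ i : Fin n,
      F (y ((i : ℕ) + 1)) - F (y (i : ℕ)) ≤ fderiv ℝ F xh (Pi.single i 1) * δ i := by
    intro i
    set q : Fin n → ℝ := xh + Pi.single i (δ i) with hqdef
    have hsup : y (i : ℕ) ⊔ q = y ((i : ℕ) + 1) := by
      funext j
      simp only [Max.max, Pi.sup_apply, hy, hqdef, Pi.add_apply]
      by_cases hj : j = i
      · subst hj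
        rw [if_neg (lt_irrefl _), if_pos (Nat.lt_succ_self _), Pi.single_eq_same, ← hmδ j]
        exact sup_eq_right.mpr (hxhm j)
      · have hne : (j : ℕ) ≠ (i : ℕ) := fun h => hj (Fin.ext h)
        rw [Pi.single_apply, if_neg hj, add_zero]
        have : ((j : ℕ) < (i : ℕ) + 1) ↔ ((j : ℕ) < (i : ℕ)) :=
          ⟨fun h => lt_of_le_of_ne (Nat.lt_succ_iff.mp h) hne, fun h => Nat.lt_succ_of_lt h⟩
        simp only [this]
        split
        · exact sup_eq_left.mpr (hxhm j)
        · exact sup_idem _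
    have hinf : y (i : ℕ) ⊓ q = xh := by
      funext j
      simp only [Min.min, Pi.inf_apply, hy, hqdef, Pi.add_apply]
      by_cases hj : j = i
      · subst hj
        rw [if_neg (lt_irrefl _), Pi.single_eq_same]
        exact inf_eq_left.mpr (le_add_of_nonneg_right (le_max_right _ _))
      · rw [Pi.single_apply, if_neg hj, add_zero]
        split
        · exact inf_eq_right.mpr (hxhm j)
        · exact inf_idem _
    have h1 := hsub (y (i : ℕ)) (hy_mem _) q (hq_mem i)
    rw [hsup, hinf] at h1
    have h2 := step_conc ℓ u F hdiff hconc xh hxh i (δ i) (le_max_right _ _) (hq_mem i)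
    have : F (y ((i : ℕ) + 1)) ≤ F (y (i : ℕ)) + F q - F xh := by linarith
    linarith [h2]
  have hsum : ∑ i : Fin n, (F (y ((i : ℕ) + 1)) - F (y (i : ℕ)))
      ≤ ∑ i : Fin n, fderiv ℝ F xh (Pi.single i 1) * δ i :=
    Finset.sum_le_sum fun i _ => hstep i
  have hfin : F (y n) ≤ F (y 0) + ∑ i : Fin n, fderiv ℝ F xh (Pi.single i 1) * δ i := by
    linarith [tel, hsum]
  calc F x ≤ F m := hxm
    _ = F (y n) := by rw [hyn]
    _ ≤ F (y 0) + ∑ i : Fin n, fderiv ℝ F xh (Pi.single i 1) * δ i := hfin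
    _ = F xh + ∑ i : Fin n, fderiv ℝ F xh (Pi.single i 1) * δ i := by rw [hy0]
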